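/- Let G be a finite generalized dihedral group and let H be a nontrivial subgroup of G. Then H is a total perfect code of G if and only if H is an (a,b)-regular set of G for every pair of integers a, b with 0 ≤ a ≤ |H|−1 and 0 ≤ b ≤ |H|. -/

import Mathlib

open scoped Pointwise

/-- The Cayley graph of a group `G` with inverse-closed connection set `S`:
`x` and `y` are adjacent iff `x ≠ y` and `y * x⁻¹ ∈ S`. -/
def cayleyGraph {G : Type*} [Group G] (S : Set G) (hS : S = S⁻¹) : SimpleGraph G where
  Adj x y := x ≠ y ∧ y * x⁻¹ ∈ S
  symm := by
    refine ⟨?_⟩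
    rintro x y ⟨hne, hmem⟩
    refine ⟨hne.symm, ?_⟩
    rw [hS, Set.mem_inv]
    simpa using hmem
  loopless := by
    refine ⟨?_⟩
    rintro x ⟨hne, -⟩
    exact hne rfl

/-- `C` is an `(a,b)`-regular set in the graph `Γ`: `C` is a nonempty proper subset of the
vertex set, every vertex in `C` has exactly `a` neighbours in `C`, and every vertex outside
`C` has exactly `b` neighbours in `C`. -/
def IsRegularSetIn {V : Type*} (Γ : SimpleGraph V) (C : Set V) (a b : ℕ) : Prop :=
  C.Nonempty ∧ C ≠ Set.univ ∧
    (∀ v ∈ C, {u | u ∈ C ∧ Γ.Adj v u}.ncard = a) ∧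
    (∀ v ∉ C, {u | u ∈ C ∧ Γ.Adj v u}.ncard = b)

/-- `C` is an `(a,b)`-regular set of the group `G` if it is an `(a,b)`-regular set in some
Cayley graph of `G`.  A `(0,1)`-regular set of `G` is a perfect code of `G`, and a
`(1,1)`-regular set of `G` is a total perfect code of `G`. -/
def IsRegularSetOf {G : Type*} [Group G] (C : Set G) (a b : ℕ) : Prop :=
  ∃ (S : Set G) (hS : S = S⁻¹), (1 : G) ∉ S ∧ IsRegularSetIn (cayleyGraph S hS) C a b
/-- `G` is a generalized dihedral group: there are an abelian subgroup `A` of `G` and an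
element `y ∈ G` with `y² = e` and `y⁻¹xy = x⁻¹` for all `x ∈ A`, such that `G` is
generated by `A` and `y`. -/
def IsGeneralizedDihedral (G : Type*) [Group G] : Prop :=
  ∃ (A : Subgroup G) (y : G),
    (∀ a ∈ A, ∀ b ∈ A, a * b = b * a) ∧ y ^ 2 = 1 ∧
    (∀ x ∈ A, y⁻¹ * x * y = x⁻¹) ∧ Subgroup.closure ((A : Set G) ∪ {y}) = ⊤

set_option linter.unusedSectionVars false

namespace GDAux

variable {G : Type*} [Group G] [Fintype G]

lemma inv_closed_eq {S : Set G} (h : ∀ x ∈ S, x⁻¹ ∈ S) : S = S⁻¹ := by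
  ext x
  simp only [Set.mem_inv]
  exact ⟨fun hx => h x hx, fun hx => by simpa using h _ hx⟩

lemma exists_invclosed_subset :
    ∀ n : ℕ, ∀ X : Set G, (∀ x ∈ X, x⁻¹ ∈ X) → (∃ x ∈ X, x⁻¹ = x) → n ≤ X.ncard →
      ∃ T, T ⊆ X ∧ (∀ x ∈ T, x⁻¹ ∈ T) ∧ T.ncard = n := by
  intro n
  induction n using Nat.strong_induction_on with
  | _ n ih =>
    intro X hXinv hfix hn
    obtain ⟨x₀, hx₀X, hx₀⟩ := hfix
    rcases n with _ | n
    · exact ⟨∅, Set.empty_subset _, by simp, by simp⟩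
    rcases n with _ | n
    · refine ⟨{x₀}, by simpa using hx₀X, ?_, by simp⟩
      intro x hx
      rcases hx with rfl
      simp [hx₀]
    · have h1 : 1 < X.ncard := by omega
      obtain ⟨x, hxX, hxne⟩ := Set.exists_ne_of_one_lt_ncard h1 x₀
      have hOX : ({x, x⁻¹} : Set G) ⊆ X := by
        intro z hz
        rcases hz with rfl | hz
        · exact hxX
        · rw [Set.mem_singleton_iff] at hz; subst hz; exact hXinv x hxX
      have hOle : ({x, x⁻¹} : Set G).ncard ≤ 2 := by
        refine le_trans (Set.ncard_insert_le _ _) ?_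
        simp
      have hOpos : 0 < ({x, x⁻¹} : Set G).ncard := by
        rw [Set.ncard_pos (Set.toFinite _)]
        exact ⟨x, Or.inl rfl⟩
      have hx₀O : x₀ ∉ ({x, x⁻¹} : Set G) := by
        intro h
        rcases h with h | h
        · exact hxne h.symm
        · rw [Set.mem_singleton_iff] at h
          apply hxne
          rw [← hx₀, h, inv_inv]
      have hX'inv : ∀ z ∈ X \ ({x, x⁻¹} : Set G), z⁻¹ ∈ X \ ({x, x⁻¹} : Set G) := by
        rintro z ⟨hzX, hzO⟩
        refine ⟨hXinv z hzX, ?_⟩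
        intro h
        rcases h with h | h
        · apply hzO; right; rw [Set.mem_singleton_iff, ← h, inv_inv]
        · rw [Set.mem_singleton_iff] at h
          apply hzO; left
          rw [← inv_inv z, h, inv_inv]
      have hdiffcard : (X \ ({x, x⁻¹} : Set G)).ncard = X.ncard - ({x, x⁻¹} : Set G).ncard :=
        Set.ncard_diff hOX
      obtain ⟨T', hT'sub, hT'inv, hT'card⟩ :=
        ih (n + 2 - ({x, x⁻¹} : Set G).ncard) (by omega) (X \ ({x, x⁻¹} : Set G)) hX'inv
          ⟨x₀, ⟨hx₀X, hx₀O⟩, hx₀⟩ (by omega)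
      have hdisj : Disjoint T' ({x, x⁻¹} : Set G) := by
        rw [Set.disjoint_left]
        intro z hz
        exact (hT'sub hz).2
      refine ⟨T' ∪ {x, x⁻¹}, Set.union_subset (hT'sub.trans Set.diff_subset) hOX, ?_, ?_⟩
      · intro z hz
        rcases hz with hz | hz
        · exact Or.inl (hT'inv z hz)
        · rcases hz with rfl | hz
          · exact Or.inr (Or.inr rfl)
          · rw [Set.mem_singleton_iff] at hz; subst hz
            exact Or.inr (Or.inl (inv_inv x))
      · rw [Set.ncard_union_eq hdisj (Set.toFinite _) (Set.toFinite _), hT'card]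
        omega

lemma exists_invclosed_pair (X X' : Set G) (hd : Disjoint X X')
    (hX : ∀ x ∈ X, x⁻¹ = x ∨ x⁻¹ ∈ X') (hX' : ∀ x ∈ X', x⁻¹ = x ∨ x⁻¹ ∈ X)
    (hc : X.ncard = X'.ncard) (b : ℕ) (hb : b ≤ X.ncard) :
    ∃ T, T ⊆ X ∪ X' ∧ (∀ x ∈ T, x⁻¹ ∈ T) ∧ (T ∩ X).ncard = b ∧ (T ∩ X').ncard = b := by
  classical
  set D : Set G := {z | z ∈ X ∧ z⁻¹ ≠ z} with hD
  set D' : Set G := {z | z ∈ X' ∧ z⁻¹ ≠ z} with hD'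
  have hDX : D ⊆ X := fun z hz => hz.1
  have hD'X' : D' ⊆ X' := fun z hz => hz.1
  have hinvD : ∀ z ∈ D, z⁻¹ ∈ D' := by
    rintro z ⟨hzX, hzne⟩
    rcases hX z hzX with h | h
    · exact absurd h hzne
    · exact ⟨h, by rw [inv_inv]; exact fun hh => hzne hh.symm⟩
  have hinvD' : ∀ z ∈ D', z⁻¹ ∈ D := by
    rintro z ⟨hzX, hzne⟩
    rcases hX' z hzX with h | h
    · exact absurd h hzne
    · exact ⟨h, by rw [inv_inv]; exact fun hh => hzne hh.symm⟩
  have himg : (fun z : G => z⁻¹) '' D = D' := by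
    ext z
    constructor
    · rintro ⟨w, hw, rfl⟩; exact hinvD w hw
    · intro hz; exact ⟨z⁻¹, hinvD' z hz, inv_inv z⟩
  have hDD' : D.ncard = D'.ncard := by
    rw [← himg, Set.ncard_image_of_injective _ inv_injective]
  by_cases hbD : b ≤ D.ncard
  · obtain ⟨P, hPD, hPcard⟩ := Set.exists_subset_card_eq hbD
    have himgP : ∀ z ∈ (fun z : G => z⁻¹) '' P, z ∈ D' := by
      rintro z ⟨w, hw, rfl⟩; exact hinvD w (hPD hw)
    refine ⟨P ∪ (fun z : G => z⁻¹) '' P, ?_, ?_, ?_, ?_⟩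
    · intro z hz
      rcases hz with hz | hz
      · exact Or.inl (hDX (hPD hz))
      · exact Or.inr (hD'X' (himgP z hz))
    · intro z hz
      rcases hz with hz | hz
      · exact Or.inr ⟨z, hz, rfl⟩
      · rcases hz with ⟨w, hw, rfl⟩
        rw [inv_inv]; exact Or.inl hw
    · have heq : (P ∪ (fun z : G => z⁻¹) '' P) ∩ X = P := by
        ext z
        constructor
        · rintro ⟨hz | hz, hzX⟩
          · exact hz
          · exact absurd hzX (Set.disjoint_left.mp hd.symm (hD'X' (himgP z hz)))
        · intro hz; exact ⟨Or.inl hz, hDX (hPD hz)⟩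
      rw [heq, hPcard]
    · have heq : (P ∪ (fun z : G => z⁻¹) '' P) ∩ X' = (fun z : G => z⁻¹) '' P := by
        ext z
        constructor
        · rintro ⟨hz | hz, hzX⟩
          · exact absurd hzX (Set.disjoint_left.mp hd (hDX (hPD hz)))
          · exact hz
        · intro hz; exact ⟨Or.inr hz, hD'X' (himgP z hz)⟩
      rw [heq, Set.ncard_image_of_injective _ inv_injective, hPcard]
  · push_neg at hbD
    have hFfix : ∀ z ∈ X \ D, z⁻¹ = z := by
      rintro z ⟨hzX, hzD⟩
      by_contra h
      exact hzD ⟨hzX, h⟩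
    have hF'fix : ∀ z ∈ X' \ D', z⁻¹ = z := by
      rintro z ⟨hzX, hzD⟩
      by_contra h
      exact hzD ⟨hzX, h⟩
    have hFcard : (X \ D).ncard = X.ncard - D.ncard := Set.ncard_diff hDX
    have hF'card : (X' \ D').ncard = X'.ncard - D'.ncard := Set.ncard_diff hD'X'
    obtain ⟨Q, hQF, hQcard⟩ := Set.exists_subset_card_eq
      (show b - D.ncard ≤ (X \ D).ncard by omega)
    obtain ⟨Q', hQ'F', hQ'card⟩ := Set.exists_subset_card_eq
      (show b - D.ncard ≤ (X' \ D').ncard by omega)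
    refine ⟨(D ∪ Q) ∪ (D' ∪ Q'), ?_, ?_, ?_, ?_⟩
    · intro z hz
      rcases hz with hz | hz
      · exact Or.inl (by rcases hz with hz | hz; exacts [hDX hz, (hQF hz).1])
      · exact Or.inr (by rcases hz with hz | hz; exacts [hD'X' hz, (hQ'F' hz).1])
    · intro z hz
      rcases hz with hz | hz
      · rcases hz with hz | hz
        · exact Or.inr (Or.inl (hinvD z hz))
        · rw [hFfix z (hQF hz)]; exact Or.inl (Or.inr hz)
      · rcases hz with hz | hz
        · exact Or.inl (Or.inl (hinvD' z hz))
        · rw [hF'fix z (hQ'F' hz)]; exact Or.inr (Or.inr hz)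
    · have heq : ((D ∪ Q) ∪ (D' ∪ Q')) ∩ X = D ∪ Q := by
        ext z
        constructor
        · rintro ⟨hz | hz, hzX⟩
          · exact hz
          · have hzX' : z ∈ X' := by rcases hz with hz | hz; exacts [hD'X' hz, (hQ'F' hz).1]
            exact absurd hzX (Set.disjoint_left.mp hd.symm hzX')
        · intro hz
          exact ⟨Or.inl hz, by rcases hz with hz | hz; exacts [hDX hz, (hQF hz).1]⟩
      have hdQ : Disjoint D Q := by
        rw [Set.disjoint_left]
        intro z hz
        exact fun hQz => (hQF hQz).2 hz
      rw [heq, Set.ncard_union_eq hdQ (Set.toFinite _) (Set.toFinite _), hQcard]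
      omega
    · have heq : ((D ∪ Q) ∪ (D' ∪ Q')) ∩ X' = D' ∪ Q' := by
        ext z
        constructor
        · rintro ⟨hz | hz, hzX⟩
          · have hzX0 : z ∈ X := by rcases hz with hz | hz; exacts [hDX hz, (hQF hz).1]
            exact absurd hzX (Set.disjoint_left.mp hd hzX0)
          · exact hz
        · intro hz
          exact ⟨Or.inr hz, by rcases hz with hz | hz; exacts [hD'X' hz, (hQ'F' hz).1]⟩
      have hdQ : Disjoint D' Q' := by
        rw [Set.disjoint_left]
        intro z hz
        exact fun hQz => (hQ'F' hQz).2 hz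
      rw [heq, Set.ncard_union_eq hdQ (Set.toFinite _) (Set.toFinite _), hQ'card]
      omega

lemma master :
    ∀ k : ℕ, ∀ P : Finset (Set G), P.card ≤ k →
    ∀ n : Set G → ℕ, ∀ pt : Set G → Set G,
    (∀ C ∈ P, ∀ D ∈ P, C ≠ D → Disjoint C D) →
    (∀ C ∈ P, n C ≤ C.ncard) →
    (∀ C ∈ P, pt C ∈ P) → (∀ C ∈ P, pt (pt C) = C) →
    (∀ C ∈ P, n (pt C) = n C) → (∀ C ∈ P, (pt C).ncard = C.ncard) →
    (∀ C ∈ P, pt C = C → (∀ x ∈ C, x⁻¹ ∈ C) ∧ ∃ x ∈ C, x⁻¹ = x) →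
    (∀ C ∈ P, pt C ≠ C → ∀ x ∈ C, x⁻¹ = x ∨ x⁻¹ ∈ pt C) →
    ∃ S : Set G, (∀ x ∈ S, ∃ C ∈ P, x ∈ C) ∧ (∀ x ∈ S, x⁻¹ ∈ S) ∧
      ∀ C ∈ P, (S ∩ C).ncard = n C := by
  classical
  intro k
  induction k with
  | zero =>
    intro P hP n pt _ _ _ _ _ _ _ _
    have : P = ∅ := Finset.card_eq_zero.mp (Nat.le_zero.mp hP)
    subst this
    exact ⟨∅, by simp, by simp, by simp⟩
  | succ k ihk =>
    intro P hP n pt hdisj hn hptP hptpt hptn hptc hself hpair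
    rcases P.eq_empty_or_nonempty with rfl | ⟨C₀, hC₀⟩
    · exact ⟨∅, by simp, by simp, by simp⟩
    have hcardpos : 1 ≤ P.card := Finset.card_pos.mpr ⟨C₀, hC₀⟩
    by_cases hC₀self : pt C₀ = C₀
    · obtain ⟨hinvC₀, hfixC₀⟩ := hself C₀ hC₀ hC₀self
      obtain ⟨T, hTsub, hTinv, hTcard⟩ :=
        exists_invclosed_subset (n C₀) C₀ hinvC₀ hfixC₀ (hn C₀ hC₀)
      have herase : ∀ C ∈ P.erase C₀, C ∈ P ∧ C ≠ C₀ := by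
        intro C hC
        exact ⟨Finset.mem_of_mem_erase hC, (Finset.mem_erase.mp hC).1⟩
      have hpt' : ∀ C ∈ P.erase C₀, pt C ∈ P.erase C₀ := by
        intro C hC
        obtain ⟨hCP, hCne⟩ := herase C hC
        refine Finset.mem_erase.mpr ⟨?_, hptP C hCP⟩
        intro h
        apply hCne
        rw [← hptpt C hCP, h, hC₀self]
      obtain ⟨S', hS'sub, hS'inv, hS'cnt⟩ := ihk (P.erase C₀)
        (by rw [Finset.card_erase_of_mem hC₀]; omega) n pt
        (fun C hC D hD h => hdisj C (herase C hC).1 D (herase D hD).1 h)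
        (fun C hC => hn C (herase C hC).1) hpt'
        (fun C hC => hptpt C (herase C hC).1)
        (fun C hC => hptn C (herase C hC).1)
        (fun C hC => hptc C (herase C hC).1)
        (fun C hC => hself C (herase C hC).1)
        (fun C hC => hpair C (herase C hC).1)
      have hS'C₀ : S' ∩ C₀ = ∅ := by
        ext z
        simp only [Set.mem_inter_iff, Set.mem_empty_iff_false, iff_false, not_and]
        intro hz hzC₀
        obtain ⟨D, hD, hzD⟩ := hS'sub z hz
        obtain ⟨hDP, hDne⟩ := herase D hD
        exact Set.disjoint_left.mp (hdisj D hDP C₀ hC₀ hDne) hzD hzC₀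
      refine ⟨T ∪ S', ?_, ?_, ?_⟩
      · intro x hx
        rcases hx with hx | hx
        · exact ⟨C₀, hC₀, hTsub hx⟩
        · obtain ⟨D, hD, hxD⟩ := hS'sub x hx
          exact ⟨D, (herase D hD).1, hxD⟩
      · intro x hx
        rcases hx with hx | hx
        · exact Or.inl (hTinv x hx)
        · exact Or.inr (hS'inv x hx)
      · intro C hC
        by_cases hCC₀ : C = C₀
        · rw [hCC₀, Set.union_inter_distrib_right, hS'C₀, Set.union_empty,
            Set.inter_eq_self_of_subset_left hTsub, hTcard]
        · have hC' : C ∈ P.erase C₀ := Finset.mem_erase.mpr ⟨hCC₀, hC⟩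
          have hTC : T ∩ C = ∅ := by
            ext z
            simp only [Set.mem_inter_iff, Set.mem_empty_iff_false, iff_false, not_and]
            intro hz hzC
            exact Set.disjoint_left.mp (hdisj C₀ hC₀ C hC (Ne.symm hCC₀)) (hTsub hz) hzC
          rw [Set.union_inter_distrib_right, hTC, Set.empty_union, hS'cnt C hC']
    · set C₁ := pt C₀ with hC₁def
      have hC₁ : C₁ ∈ P := hptP C₀ hC₀
      have hne : C₁ ≠ C₀ := hC₀self
      have hptC₁ : pt C₁ = C₀ := hptpt C₀ hC₀
      have hdisj01 : Disjoint C₀ C₁ := hdisj C₀ hC₀ C₁ hC₁ (Ne.symm hne)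
      have hpair₀ := hpair C₀ hC₀ hC₀self
      have hpair₁ : ∀ x ∈ C₁, x⁻¹ = x ∨ x⁻¹ ∈ C₀ := by
        have h := hpair C₁ hC₁ (by rw [hptC₁]; exact Ne.symm hne)
        rwa [hptC₁] at h
      obtain ⟨T, hTsub, hTinv, hT0, hT1⟩ :=
        exists_invclosed_pair C₀ C₁ hdisj01 hpair₀ hpair₁ (hptc C₀ hC₀).symm (n C₀) (hn C₀ hC₀)
      set P' := (P.erase C₀).erase C₁ with hP'def
      have herase : ∀ C ∈ P', C ∈ P ∧ C ≠ C₀ ∧ C ≠ C₁ := by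
        intro C hC
        obtain ⟨h1, h2⟩ := Finset.mem_erase.mp hC
        obtain ⟨h3, h4⟩ := Finset.mem_erase.mp h2
        exact ⟨h4, h3, h1⟩
      have hpt' : ∀ C ∈ P', pt C ∈ P' := by
        intro C hC
        obtain ⟨hCP, hne0, hne1⟩ := herase C hC
        refine Finset.mem_erase.mpr ⟨?_, Finset.mem_erase.mpr ⟨?_, hptP C hCP⟩⟩
        · intro h; apply hne0; rw [← hptpt C hCP, h, hptC₁]
        · intro h; apply hne1; rw [← hptpt C hCP, h, ← hC₁def]
      have hcard' : P'.card ≤ k := by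
        have h1 : (P.erase C₀).card = P.card - 1 := Finset.card_erase_of_mem hC₀
        have h2 : P'.card ≤ (P.erase C₀).card := Finset.card_erase_le
        omega
      obtain ⟨S', hS'sub, hS'inv, hS'cnt⟩ := ihk P' hcard' n pt
        (fun C hC D hD h => hdisj C (herase C hC).1 D (herase D hD).1 h)
        (fun C hC => hn C (herase C hC).1) hpt'
        (fun C hC => hptpt C (herase C hC).1)
        (fun C hC => hptn C (herase C hC).1)
        (fun C hC => hptc C (herase C hC).1)
        (fun C hC => hself C (herase C hC).1)
        (fun C hC => hpair C (herase C hC).1)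
      have hS'dis : ∀ C ∈ P, C = C₀ ∨ C = C₁ → S' ∩ C = ∅ := by
        intro C hC hCor
        ext z
        simp only [Set.mem_inter_iff, Set.mem_empty_iff_false, iff_false, not_and]
        intro hz hzC
        obtain ⟨D, hD, hzD⟩ := hS'sub z hz
        obtain ⟨hDP, hne0, hne1⟩ := herase D hD
        have hDne : D ≠ C := by rcases hCor with rfl | rfl; exacts [hne0, hne1]
        exact Set.disjoint_left.mp (hdisj D hDP C hC hDne) hzD hzC
      refine ⟨T ∪ S', ?_, ?_, ?_⟩
      · intro x hx
        rcases hx with hx | hx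
        · rcases hTsub hx with h | h
          exacts [⟨C₀, hC₀, h⟩, ⟨C₁, hC₁, h⟩]
        · obtain ⟨D, hD, hxD⟩ := hS'sub x hx
          exact ⟨D, (herase D hD).1, hxD⟩
      · intro x hx
        rcases hx with hx | hx
        · exact Or.inl (hTinv x hx)
        · exact Or.inr (hS'inv x hx)
      · intro C hC
        by_cases h0 : C = C₀
        · rw [h0, Set.union_inter_distrib_right, hS'dis C₀ hC₀ (Or.inl rfl),
            Set.union_empty, hT0]
        by_cases h1 : C = C₁
        · rw [h1, Set.union_inter_distrib_right, hS'dis C₁ hC₁ (Or.inr rfl),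
            Set.union_empty, hT1]
          exact (hptn C₀ hC₀).symm
        · have hC' : C ∈ P' := Finset.mem_erase.mpr ⟨h1, Finset.mem_erase.mpr ⟨h0, hC⟩⟩
          have hTC : T ∩ C = ∅ := by
            ext z
            simp only [Set.mem_inter_iff, Set.mem_empty_iff_false, iff_false, not_and]
            intro hz hzC
            rcases hTsub hz with h | h
            · exact Set.disjoint_left.mp (hdisj C₀ hC₀ C hC (Ne.symm h0)) h hzC
            · exact Set.disjoint_left.mp (hdisj C₁ hC₁ C hC (Ne.symm h1)) h hzC
          rw [Set.union_inter_distrib_right, hTC, Set.empty_union, hS'cnt C hC']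

def cosetOf (H : Subgroup G) (g : G) : Set G := {x : G | x * g⁻¹ ∈ H}

variable (H : Subgroup G)

lemma self_mem_cosetOf (g : G) : g ∈ cosetOf H g := by
  simp [cosetOf, one_mem]

lemma cosetOf_eq_of_mem {g x : G} (h : x ∈ cosetOf H g) : cosetOf H x = cosetOf H g := by
  ext z
  simp only [cosetOf, Set.mem_setOf_eq] at *
  constructor
  · intro hz
    have h2 := mul_mem hz h
    rwa [show z * x⁻¹ * (x * g⁻¹) = z * g⁻¹ by group] at h2
  · intro hz
    have h2 := mul_mem hz (inv_mem h)
    rwa [show z * g⁻¹ * (x * g⁻¹)⁻¹ = z * x⁻¹ by group] at h2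

lemma cosetOf_disjoint {g g' : G} (h : cosetOf H g ≠ cosetOf H g') :
    Disjoint (cosetOf H g) (cosetOf H g') := by
  rw [Set.disjoint_left]
  intro z hz hz'
  exact h ((cosetOf_eq_of_mem H hz).symm.trans (cosetOf_eq_of_mem H hz'))

lemma cosetOf_ncard (g : G) : (cosetOf H g).ncard = (H : Set G).ncard := by
  have h : cosetOf H g = (fun h => h * g) '' (H : Set G) := by
    ext z
    simp only [cosetOf, Set.mem_setOf_eq, Set.mem_image, SetLike.mem_coe]
    constructor
    · intro hz
      exact ⟨z * g⁻¹, hz, by group⟩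
    · rintro ⟨h, hh, rfl⟩
      simpa using hh
  rw [h, Set.ncard_image_of_injective _ (mul_left_injective g)]

lemma not_mem_H_of_mem_cosetOf {g : G} (hg : g ∉ H) {x : G} (hx : x ∈ cosetOf H g) :
    x ∉ H := by
  intro hxH
  apply hg
  have h2 := mul_mem (inv_mem hxH) hx
  rw [show x⁻¹ * (x * g⁻¹) = g⁻¹ by group] at h2
  exact (inv_mem_iff).mp h2

lemma one_not_mem_cosetOf {g : G} (hg : g ∉ H) : (1 : G) ∉ cosetOf H g :=
  fun h => not_mem_H_of_mem_cosetOf H hg h (one_mem H)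

lemma cosetOf_ne_H_diff {g : G} (hg : g ∉ H) : cosetOf H g ≠ (H : Set G) \ {1} := by
  intro h
  have hm := self_mem_cosetOf H g
  rw [h] at hm
  exact hg hm.1

lemma chara (S : Set G) (hS : S = S⁻¹) (h1 : (1 : G) ∉ S) (a b : ℕ) :
    IsRegularSetIn (cayleyGraph S hS) (H : Set G) a b ↔
      ((H : Set G) ≠ Set.univ ∧ (S ∩ (H : Set G)).ncard = a ∧
        ∀ g ∉ H, (S ∩ cosetOf H g).ncard = b) := by
  have key : ∀ v : G, {u | u ∈ (H : Set G) ∧ (cayleyGraph S hS).Adj v u} =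
      (fun s => s * v) '' (S ∩ {x | x * v ∈ H}) := by
    intro v
    ext u
    simp only [Set.mem_setOf_eq, Set.mem_image, Set.mem_inter_iff, cayleyGraph,
      SimpleGraph.mk']
    constructor
    · rintro ⟨huH, _, huS⟩
      refine ⟨u * v⁻¹, ⟨huS, ?_⟩, by group⟩
      rwa [show u * v⁻¹ * v = u by group]
    · rintro ⟨s, ⟨hsS, hsvH⟩, rfl⟩
      refine ⟨hsvH, ?_, by rwa [show s * v * v⁻¹ = s by group]⟩
      intro hv
      apply h1
      have hs1 : s = 1 := mul_right_cancel (hv.symm.trans (one_mul v).symm)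
      rwa [hs1] at hsS
  have keycard : ∀ v : G,
      {u | u ∈ (H : Set G) ∧ (cayleyGraph S hS).Adj v u}.ncard
        = (S ∩ {x | x * v ∈ H}).ncard := by
    intro v
    rw [key v, Set.ncard_image_of_injective _ (mul_left_injective v)]
  constructor
  · rintro ⟨-, hproper, hin, hout⟩
    refine ⟨hproper, ?_, ?_⟩
    · have h := hin 1 (one_mem H)
      rw [keycard 1] at h
      rwa [show {x : G | x * 1 ∈ H} = (H : Set G) from by ext x; simp] at h
    · intro g hg
      have hg' : g⁻¹ ∉ (H : Set G) := by
        simp only [SetLike.mem_coe, inv_mem_iff]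
        exact hg
      have h := hout g⁻¹ hg'
      rw [keycard] at h
      exact h
  · rintro ⟨hproper, ha, hb⟩
    refine ⟨⟨1, one_mem H⟩, hproper, ?_, ?_⟩
    · intro v hv
      rw [keycard]
      rwa [show {x : G | x * v ∈ H} = (H : Set G) from by
        ext x; exact mul_mem_cancel_right hv]
    · intro v hv
      rw [keycard]
      have h := hb v⁻¹ (by simpa using hv)
      simpa [cosetOf] using h

lemma hcard_coe : (H : Set G).ncard = Nat.card H := by
  rw [← Nat.card_coe_set_eq]
  rfl

lemma finish (a b : ℕ) (hproper : (H : Set G) ≠ Set.univ)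
    (haH : a ≤ Nat.card H - 1) (hbH : b ≤ Nat.card H)
    (P : Finset (Set G)) (pt : Set G → Set G)
    (hPmem : ∀ C ∈ P, C = (H : Set G) \ {1} ∨ ∃ g, g ∉ H ∧ C = cosetOf H g)
    (hHP : (H : Set G) \ {1} ∈ P)
    (hcov : ∀ g ∉ H, cosetOf H g ∈ P)
    (hptP : ∀ C ∈ P, pt C ∈ P)
    (hptpt : ∀ C ∈ P, pt (pt C) = C)
    (hptHd : pt ((H : Set G) \ {1}) = (H : Set G) \ {1})
    (hself : ∀ C ∈ P, pt C = C → (∀ x ∈ C, x⁻¹ ∈ C) ∧ ∃ x ∈ C, x⁻¹ = x)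
    (hpair : ∀ C ∈ P, pt C ≠ C → ∀ x ∈ C, x⁻¹ = x ∨ x⁻¹ ∈ pt C) :
    IsRegularSetOf (H : Set G) a b := by
  classical
  set nf : Set G → ℕ := fun C => if C = (H : Set G) \ {1} then a else b with hnf
  have hHdcard : ((H : Set G) \ {1}).ncard = Nat.card H - 1 := by
    rw [Set.ncard_diff_singleton_of_mem (by exact one_mem H), hcard_coe]
  have hptne : ∀ C ∈ P, C ≠ (H : Set G) \ {1} → pt C ≠ (H : Set G) \ {1} := by
    intro C hC hCne h
    apply hCne
    rw [← hptpt C hC, h, hptHd]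
  have hn : ∀ C ∈ P, nf C ≤ C.ncard := by
    intro C hC
    by_cases hCH : C = (H : Set G) \ {1}
    · rw [hnf]; simp only [if_pos hCH, hCH, hHdcard]; exact haH
    · rcases hPmem C hC with h | ⟨g, hg, rfl⟩
      · exact absurd h hCH
      · rw [hnf]; simp only [if_neg hCH, cosetOf_ncard, hcard_coe]; exact hbH
  have hptn : ∀ C ∈ P, nf (pt C) = nf C := by
    intro C hC
    by_cases hCH : C = (H : Set G) \ {1}
    · rw [hCH, hptHd]
    · rw [hnf]
      simp only [if_neg hCH, if_neg (hptne C hC hCH)]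
  have hptc : ∀ C ∈ P, (pt C).ncard = C.ncard := by
    intro C hC
    by_cases hCH : C = (H : Set G) \ {1}
    · rw [hCH, hptHd]
    · rcases hPmem (pt C) (hptP C hC) with h | ⟨g, hg, hco⟩
      · exact absurd h (hptne C hC hCH)
      · rcases hPmem C hC with h' | ⟨g', hg', hco'⟩
        · exact absurd h' hCH
        · rw [hco, hco', cosetOf_ncard, cosetOf_ncard]
  have hdisj : ∀ C ∈ P, ∀ D ∈ P, C ≠ D → Disjoint C D := by
    intro C hC D hD hne
    rcases hPmem C hC with hC1 | ⟨g, hg, hC1⟩ <;> rcases hPmem D hD with hD1 | ⟨g', hg', hD1⟩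
    · exact absurd (hC1.trans hD1.symm) hne
    · rw [hC1, hD1, Set.disjoint_right]
      intro z hz
      exact fun h => not_mem_H_of_mem_cosetOf H hg' hz h.1
    · rw [hC1, hD1, Set.disjoint_left]
      intro z hz
      exact fun h => not_mem_H_of_mem_cosetOf H hg hz h.1
    · rw [hC1, hD1]
      exact cosetOf_disjoint H (by rw [← hC1, ← hD1]; exact hne)
  obtain ⟨S, hSsub, hSinv, hScnt⟩ :=
    master P.card P le_rfl nf pt hdisj hn hptP hptpt hptn hptc hself hpair
  have h1S : (1 : G) ∉ S := by
    intro h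
    obtain ⟨C, hC, h1C⟩ := hSsub 1 h
    rcases hPmem C hC with h' | ⟨g, hg, h'⟩
    · rw [h'] at h1C; exact h1C.2 rfl
    · rw [h'] at h1C; exact one_not_mem_cosetOf H hg h1C
  have hSH : S ∩ (H : Set G) = S ∩ ((H : Set G) \ {1}) := by
    ext z
    constructor
    · rintro ⟨hz, hzH⟩
      refine ⟨hz, hzH, fun h => h1S ?_⟩
      rw [Set.mem_singleton_iff] at h
      rwa [h] at hz
    · rintro ⟨hz, hzH, -⟩
      exact ⟨hz, hzH⟩
  refine ⟨S, inv_closed_eq hSinv, h1S, (chara H S (inv_closed_eq hSinv) h1S a b).mpr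
    ⟨hproper, ?_, ?_⟩⟩
  · rw [hSH, hScnt _ hHP]
    simp only [hnf, if_pos rfl]
  · intro g hg
    rw [hScnt _ (hcov g hg)]
    simp only [hnf, if_neg (cosetOf_ne_H_diff H hg)]

lemma gd_struct (hG : IsGeneralizedDihedral G) :
    ∃ A : Subgroup G, (∀ a ∈ A, ∀ b ∈ A, a * b = b * a) ∧
      (∀ z : G, z ∉ A → z⁻¹ = z) ∧ (∀ z z' : G, z ∉ A → z' ∉ A → z * z' ∈ A) := by
  obtain ⟨A, y, hcomm, hy2, hconj, hcl⟩ := hG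
  have hyy : y * y = 1 := by rw [← pow_two]; exact hy2
  have hyinv : y⁻¹ = y := inv_eq_of_mul_eq_one_right hyy
  have hxy : ∀ x ∈ A, y * x * y = x⁻¹ := fun x hx => by
    have h := hconj x hx; rwa [hyinv] at h
  have hswap : ∀ v ∈ A, y * v = v⁻¹ * y := by
    intro v hv
    have h := hxy v hv
    calc y * v = (y * v * y) * y⁻¹ := by group
    _ = v⁻¹ * y := by rw [h, hyinv]
  have hAyinv : ∀ u ∈ A, (u * y) * (u * y) = 1 := by
    intro u hu
    calc u * y * (u * y) = u * (y * u) * y := by group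
    _ = u * (u⁻¹ * y) * y := by rw [hswap u hu]
    _ = y * y := by group
    _ = 1 := hyy
  have hprod : ∀ u ∈ A, ∀ v ∈ A, (u * y) * (v * y) = u * v⁻¹ := by
    intro u hu v hv
    calc (u * y) * (v * y) = u * (y * v) * y := by group
    _ = u * (v⁻¹ * y) * y := by rw [hswap v hv]
    _ = u * v⁻¹ * (y * y) := by group
    _ = u * v⁻¹ := by rw [hyy, mul_one]
  have hdec : ∀ g : G, g ∈ A ∨ ∃ u ∈ A, g = u * y := by
    intro g
    have hg : g ∈ Subgroup.closure ((A : Set G) ∪ {y}) := by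
      rw [hcl]; exact Subgroup.mem_top g
    induction hg using Subgroup.closure_induction with
    | mem x hx =>
      rcases hx with hx | hx
      · exact Or.inl hx
      · rw [Set.mem_singleton_iff] at hx
        exact Or.inr ⟨1, one_mem A, by rw [hx, one_mul]⟩
    | one => exact Or.inl (one_mem A)
    | mul x z hx hz ihx ihz =>
      rcases ihx with hxA | ⟨u, hu, rfl⟩ <;> rcases ihz with hzA | ⟨v, hv, rfl⟩
      · exact Or.inl (mul_mem hxA hzA)
      · exact Or.inr ⟨x * v, mul_mem hxA hv, by group⟩
      · refine Or.inr ⟨u * z⁻¹, mul_mem hu (inv_mem hzA), ?_⟩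
        calc (u * y) * z = u * (y * z) := by group
        _ = u * (z⁻¹ * y) := by rw [hswap z hzA]
        _ = u * z⁻¹ * y := by group
      · rw [hprod u hu v hv]
        exact Or.inl (mul_mem hu (inv_mem hv))
    | inv x hx ihx =>
      rcases ihx with hxA | ⟨u, hu, rfl⟩
      · exact Or.inl (inv_mem hxA)
      · exact Or.inr ⟨u, hu, inv_eq_of_mul_eq_one_right (hAyinv u hu)⟩
  refine ⟨A, hcomm, ?_, ?_⟩
  · intro z hz
    rcases hdec z with h | ⟨u, hu, rfl⟩
    · exact absurd h hz
    · exact inv_eq_of_mul_eq_one_right (hAyinv u hu)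
  · intro z z' hz hz'
    rcases hdec z with h | ⟨u, hu, rfl⟩
    · exact absurd h hz
    rcases hdec z' with h | ⟨v, hv, rfl⟩
    · exact absurd h hz'
    rw [hprod u hu v hv]
    exact mul_mem hu (inv_mem hv)

end GDAux

theorem statement_3 {G : Type*} [Group G] [Fintype G]
    (hG : IsGeneralizedDihedral G) (H : Subgroup G) (hH : H ≠ ⊥) :
    IsRegularSetOf (H : Set G) 1 1 ↔
      ∀ a b : ℕ, a ≤ Nat.card H - 1 → b ≤ Nat.card H →
        IsRegularSetOf (H : Set G) a b := by
  classical
  constructor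
  · intro htpc a b ha hb
    obtain ⟨S₀, hS₀inv, hS₀1, hreg⟩ := htpc
    rw [GDAux.chara H S₀ hS₀inv hS₀1] at hreg
    obtain ⟨hproper, hSH, hScoset⟩ := hreg
    have hinvS₀ : ∀ x ∈ S₀, x⁻¹ ∈ S₀ := by
      intro x hx
      rw [hS₀inv]
      rwa [Set.mem_inv, inv_inv]
    obtain ⟨t, ht⟩ := Set.ncard_eq_one.mp hSH
    have htm : t ∈ S₀ ∩ (H : Set G) := by rw [ht]; rfl
    have htS : t ∈ S₀ := htm.1
    have htH : t ∈ H := htm.2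
    have htinv : t⁻¹ = t := by
      have h2 : t⁻¹ ∈ S₀ ∩ (H : Set G) := ⟨hinvS₀ t htS, inv_mem htH⟩
      rw [ht] at h2
      exact h2
    have htne : t ≠ 1 := fun h => hS₀1 (h ▸ htS)
    have hfixco : ∀ g ∉ H, (∀ x ∈ GDAux.cosetOf H g, x⁻¹ ∈ GDAux.cosetOf H g) →
        ∃ s ∈ GDAux.cosetOf H g, s⁻¹ = s := by
      intro g hg hcl
      obtain ⟨s, hs⟩ := Set.ncard_eq_one.mp (hScoset g hg)
      have hsm : s ∈ S₀ ∩ GDAux.cosetOf H g := by rw [hs]; rfl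
      have h2 : s⁻¹ ∈ S₀ ∩ GDAux.cosetOf H g := ⟨hinvS₀ s hsm.1, hcl s hsm.2⟩
      rw [hs] at h2
      exact ⟨s, hsm.2, h2⟩
    obtain ⟨A, hcomm, hinvol, hprodA⟩ := GDAux.gd_struct hG
    have hHd_invmem : ∀ x ∈ (H : Set G) \ {1}, x⁻¹ ∈ (H : Set G) \ {1} := by
      rintro x ⟨hx, hx1⟩
      refine ⟨inv_mem hx, fun h => hx1 ?_⟩
      rw [Set.mem_singleton_iff] at h ⊢
      rw [← inv_inv x, h, inv_one]
    by_cases hHA : ∀ x, x ∈ H → x ∈ A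
    · -- Case 1 : H ≤ A
      set P : Finset (Set G) := insert ((H : Set G) \ {1})
        ((Finset.univ.filter (fun g : G => g ∉ H)).image (GDAux.cosetOf H)) with hPdef
      have hHP : ((H : Set G) \ {1}) ∈ P := Finset.mem_insert_self _ _
      have hcov : ∀ g ∉ H, GDAux.cosetOf H g ∈ P := by
        intro g hg
        refine Finset.mem_insert_of_mem (Finset.mem_image.mpr ⟨g, ?_, rfl⟩)
        simp [hg]
      have hPmem : ∀ C ∈ P, C = (H : Set G) \ {1} ∨ ∃ g, g ∉ H ∧ C = GDAux.cosetOf H g := by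
        intro C hC
        rcases Finset.mem_insert.mp hC with h | h
        · exact Or.inl h
        · obtain ⟨g, hg, rfl⟩ := Finset.mem_image.mp h
          refine Or.inr ⟨g, ?_, rfl⟩
          simpa using (Finset.mem_filter.mp hg).2
      have hHdinv : ((H : Set G) \ {1})⁻¹ = (H : Set G) \ {1} :=
        (GDAux.inv_closed_eq hHd_invmem).symm
      have hcoinvA : ∀ g ∈ A, g ∉ H → (GDAux.cosetOf H g)⁻¹ = GDAux.cosetOf H g⁻¹ := by
        intro g hgA hgH
        ext z
        rw [Set.mem_inv]
        show z⁻¹ * g⁻¹ ∈ H ↔ z * g⁻¹⁻¹ ∈ H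
        rw [inv_inv]
        constructor
        · intro h
          have hgz : g * z ∈ H := by
            have h2 := inv_mem h
            rwa [mul_inv_rev, inv_inv, inv_inv] at h2
          have hzA : z ∈ A := by
            have h3 := mul_mem (inv_mem hgA) (hHA _ hgz)
            rwa [show g⁻¹ * (g * z) = z by group] at h3
          rw [hcomm z hzA g hgA]
          exact hgz
        · intro h
          have hzA : z ∈ A := by
            have h3 := mul_mem (hHA _ h) (inv_mem hgA)
            rwa [show (z * g) * g⁻¹ = z by group] at h3
          have h2 : g * z ∈ H := by rwa [← hcomm z hzA g hgA]
          have h3 := inv_mem h2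
          rwa [mul_inv_rev] at h3
      have hconotA : ∀ g ∉ A, ∀ x ∈ GDAux.cosetOf H g, x ∉ A := by
        intro g hgA x hx hxA
        apply hgA
        have h1 : x * g⁻¹ ∈ H := hx
        have h2 : (x * g⁻¹)⁻¹ * x ∈ A := mul_mem (inv_mem (hHA _ h1)) hxA
        rwa [show (x * g⁻¹)⁻¹ * x = g by group] at h2
      have hcoinv_notA : ∀ g ∉ A, (GDAux.cosetOf H g)⁻¹ = GDAux.cosetOf H g := by
        intro g hgA
        refine (GDAux.inv_closed_eq fun x hx => ?_).symm
        rw [hinvol x (hconotA g hgA x hx)]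
        exact hx
      have hptP : ∀ C ∈ P, C⁻¹ ∈ P := by
        intro C hC
        rcases hPmem C hC with h | ⟨g, hg, h⟩
        · rw [h, hHdinv]; exact hHP
        · by_cases hgA : g ∈ A
          · rw [h, hcoinvA g hgA hg]
            exact hcov g⁻¹ (fun h2 => hg (by rwa [inv_mem_iff] at h2))
          · rw [h, hcoinv_notA g hgA]; exact hcov g hg
      have hptpt : ∀ C ∈ P, (C⁻¹)⁻¹ = C := fun C _ => inv_inv C
      have hself : ∀ C ∈ P, C⁻¹ = C → (∀ x ∈ C, x⁻¹ ∈ C) ∧ ∃ x ∈ C, x⁻¹ = x := by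
        intro C hC hCinv
        have hmem : ∀ x ∈ C, x⁻¹ ∈ C := by
          intro x hx
          rw [← hCinv, Set.mem_inv, inv_inv]
          exact hx
        refine ⟨hmem, ?_⟩
        rcases hPmem C hC with h | ⟨g, hg, h⟩
        · exact ⟨t, by rw [h]; exact ⟨htH, htne⟩, htinv⟩
        · subst h
          exact hfixco g hg hmem
      have hpair : ∀ C ∈ P, C⁻¹ ≠ C → ∀ x ∈ C, x⁻¹ = x ∨ x⁻¹ ∈ C⁻¹ := by
        intro C _ _ x hx
        exact Or.inr (by rw [Set.mem_inv, inv_inv]; exact hx)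
      exact GDAux.finish H a b hproper ha hb P (fun C => C⁻¹) hPmem hHP hcov hptP hptpt
        hHdinv hself hpair
    · -- Case 2 : H ⊄ A
      push_neg at hHA
      obtain ⟨w, hwH, hwA⟩ := hHA
      have hwinv : w⁻¹ = w := hinvol w hwA
      have hw1 : w ≠ 1 := fun h => hwA (by rw [h]; exact one_mem A)
      set P : Finset (Set G) := insert ((H : Set G) \ {1})
        ((Finset.univ.filter (fun g : G => g ∈ A ∧ g ∉ H)).image (GDAux.cosetOf H)) with hPdef
      set pt : Set G → Set G := fun C =>
        if C = (H : Set G) \ {1} then C else (H : Set G) * (C ∩ (A : Set G))⁻¹ with hptdef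
      have hHP : ((H : Set G) \ {1}) ∈ P := Finset.mem_insert_self _ _
      have hcovA : ∀ g, g ∈ A → g ∉ H → GDAux.cosetOf H g ∈ P := by
        intro g hgA hg
        refine Finset.mem_insert_of_mem (Finset.mem_image.mpr ⟨g, ?_, rfl⟩)
        simp [hgA, hg]
      have hcov : ∀ g ∉ H, GDAux.cosetOf H g ∈ P := by
        intro g hg
        by_cases hgA : g ∈ A
        · exact hcovA g hgA hg
        · have hwgA : w * g ∈ A := hprodA w g hwA hgA
          have hwgH : w * g ∉ H := by
            intro h
            apply hg
            have h2 := mul_mem (inv_mem hwH) h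
            rwa [show w⁻¹ * (w * g) = g by group] at h2
          have hmem : w * g ∈ GDAux.cosetOf H g := by
            show (w * g) * g⁻¹ ∈ H
            rwa [show (w * g) * g⁻¹ = w by group]
          rw [← GDAux.cosetOf_eq_of_mem H hmem]
          exact hcovA (w * g) hwgA hwgH
      have hPmemA : ∀ C ∈ P,
          C = (H : Set G) \ {1} ∨ ∃ g, g ∈ A ∧ g ∉ H ∧ C = GDAux.cosetOf H g := by
        intro C hC
        rcases Finset.mem_insert.mp hC with h | h
        · exact Or.inl h
        · obtain ⟨g, hg, rfl⟩ := Finset.mem_image.mp h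
          have h2 := (Finset.mem_filter.mp hg).2
          exact Or.inr ⟨g, h2.1, h2.2, rfl⟩
      have hPmem : ∀ C ∈ P, C = (H : Set G) \ {1} ∨ ∃ g, g ∉ H ∧ C = GDAux.cosetOf H g := by
        intro C hC
        rcases hPmemA C hC with h | ⟨g, _, hg, h⟩
        · exact Or.inl h
        · exact Or.inr ⟨g, hg, h⟩
      have hptHd : pt ((H : Set G) \ {1}) = (H : Set G) \ {1} := by
        simp [hptdef]
      have hptco : ∀ g, g ∈ A → g ∉ H →
          pt (GDAux.cosetOf H g) = GDAux.cosetOf H g⁻¹ := by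
        intro g hgA hg
        rw [hptdef]
        simp only [if_neg (GDAux.cosetOf_ne_H_diff H hg)]
        ext z
        constructor
        · intro hz
          rw [Set.mem_mul] at hz
          obtain ⟨h, hh, x, hx, rfl⟩ := hz
          rw [Set.mem_inv] at hx
          obtain ⟨hxc, hxA⟩ := hx
          show (h * x) * g⁻¹⁻¹ ∈ H
          rw [inv_inv]
          have hxg : x * g ∈ H := by
            have h2 := inv_mem (show x⁻¹ * g⁻¹ ∈ H from hxc)
            rw [mul_inv_rev, inv_inv, inv_inv] at h2
            rwa [hcomm g hgA x (by rw [← inv_inv x]; exact inv_mem hxA)] at h2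
          rw [mul_assoc]
          exact mul_mem (show h ∈ H from hh) hxg
        · intro hz
          have hz' : z * g ∈ H := by
            have h0 : z * g⁻¹⁻¹ ∈ H := hz
            rwa [inv_inv] at h0
          rw [Set.mem_mul]
          refine ⟨z * g, hz', g⁻¹, ?_, by group⟩
          rw [Set.mem_inv, inv_inv]
          exact ⟨GDAux.self_mem_cosetOf H g, hgA⟩
      have hptP : ∀ C ∈ P, pt C ∈ P := by
        intro C hC
        rcases hPmemA C hC with h | ⟨g, hgA, hg, h⟩
        · rw [h, hptHd]; exact hHP
        · rw [h, hptco g hgA hg]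
          exact hcovA g⁻¹ (inv_mem hgA) (fun h2 => hg (by rwa [inv_mem_iff] at h2))
      have hptpt : ∀ C ∈ P, pt (pt C) = C := by
        intro C hC
        rcases hPmemA C hC with h | ⟨g, hgA, hg, h⟩
        · rw [h, hptHd, hptHd]
        · rw [h, hptco g hgA hg,
            hptco g⁻¹ (inv_mem hgA) (fun h2 => hg (by rwa [inv_mem_iff] at h2)), inv_inv]
      have hself : ∀ C ∈ P, pt C = C → (∀ x ∈ C, x⁻¹ ∈ C) ∧ ∃ x ∈ C, x⁻¹ = x := by
        intro C hC hCself
        rcases hPmemA C hC with h | ⟨g, hgA, hg, h⟩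
        · subst h
          refine ⟨hHd_invmem, ⟨w, ⟨hwH, ?_⟩, hwinv⟩⟩
          simpa using hw1
        · subst h
          have hCeq : GDAux.cosetOf H g⁻¹ = GDAux.cosetOf H g := by
            rw [← hptco g hgA hg, hCself]
          constructor
          · intro x hx
            by_cases hxA : x ∈ A
            · rw [← hCeq]
              show x⁻¹ * g⁻¹⁻¹ ∈ H
              rw [inv_inv]
              have h2 := inv_mem (show x * g⁻¹ ∈ H from hx)
              rw [mul_inv_rev, inv_inv] at h2
              rwa [hcomm g hgA x⁻¹ (inv_mem hxA)] at h2
            · rw [hinvol x hxA]; exact hx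
          · refine ⟨w * g, ?_, ?_⟩
            · show (w * g) * g⁻¹ ∈ H
              rwa [show (w * g) * g⁻¹ = w by group]
            · apply hinvol
              intro h2
              apply hwA
              have h3 := mul_mem h2 (inv_mem hgA)
              rwa [show (w * g) * g⁻¹ = w by group] at h3
      have hpair : ∀ C ∈ P, pt C ≠ C → ∀ x ∈ C, x⁻¹ = x ∨ x⁻¹ ∈ pt C := by
        intro C hC hne x hx
        rcases hPmemA C hC with h | ⟨g, hgA, hg, h⟩
        · exact absurd (h ▸ hptHd) (h ▸ hne)
        · subst h
          by_cases hxA : x ∈ A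
          · right
            rw [hptco g hgA hg]
            show x⁻¹ * g⁻¹⁻¹ ∈ H
            rw [inv_inv]
            have h2 := inv_mem (show x * g⁻¹ ∈ H from hx)
            rw [mul_inv_rev, inv_inv] at h2
            rwa [hcomm g hgA x⁻¹ (inv_mem hxA)] at h2
          · exact Or.inl (hinvol x hxA)
      exact GDAux.finish H a b hproper ha hb P pt hPmem hHP hcov hptP hptpt
        hptHd hself hpair
  · intro h
    have h2 : 1 < Nat.card H := (Subgroup.one_lt_card_iff_ne_bot H).mpr hH
    exact h 1 1 (by omega) (by omega)
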